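/- Let T > 0 be the capacity ratio, let γ ∈ (0,1) be the fraction of lookups in the workload, and let E, B, f₁, I_r, I_w, c_r, c_w be positive reals. Define X = T·E·(I_r+I_w)·(1−γ) + T·B·c_w·(1−γ), Y = B·f₁·I_r·γ, and Z = B·c_r·γ, and for each integer i ≥ 1 define the optimal compaction policy K*_i = √(X / (Y·T^{i−1} + Z)). Then for every integer i ≥ 2, the policy propagation formula holds: 1/K*_{i+1} = √( 1/(K*_i)² + T·( 1/(K*_i)² − 1/(K*_{i−1})² ) ). -/
import Mathlib


/-- **Policy propagation formula (Lemma 1).**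
Under the Monkey Bloom-filter allocation, with `X = T·E·(I_r+I_w)·(1−γ) + T·B·c_w·(1−γ)`,
`Y = B·f₁·I_r·γ`, `Z = B·c_r·γ`, and optimal policy `K*_i = √(X / (Y·T^{i−1} + Z))`
for each level `i ≥ 1`, the propagation formula
`1/K*_{i+1} = √(1/(K*_i)² + T·(1/(K*_i)² − 1/(K*_{i−1})²))` holds for all `i ≥ 2`. -/
theorem policy_propagation
    (T γ E B f₁ Ir Iw cr cw X Y Z : ℝ)
    (hT : 0 < T) (hγ0 : 0 < γ) (hγ1 : γ < 1)
    (hE : 0 < E) (hB : 0 < B) (hf : 0 < f₁) (hIr : 0 < Ir) (hIw : 0 < Iw)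
    (hcr : 0 < cr) (hcw : 0 < cw)
    (hX : X = T * E * (Ir + Iw) * (1 - γ) + T * B * cw * (1 - γ))
    (hY : Y = B * f₁ * Ir * γ)
    (hZ : Z = B * cr * γ)
    (K : ℕ → ℝ)
    (hK : ∀ i : ℕ, 1 ≤ i → K i = Real.sqrt (X / (Y * T ^ (i - 1) + Z)))
    (i : ℕ) (hi : 2 ≤ i) :
    1 / K (i + 1) =
      Real.sqrt (1 / (K i) ^ 2 + T * (1 / (K i) ^ 2 - 1 / (K (i - 1)) ^ 2)) := by
  obtain ⟨j, rfl⟩ : ∃ j, i = j + 2 := ⟨i - 2, by omega⟩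
  have hγ' : 0 < 1 - γ := by linarith
  have hX0 : 0 < X := by
    rw [hX]; positivity
  have hY0 : 0 < Y := by rw [hY]; positivity
  have hZ0 : 0 < Z := by rw [hZ]; positivity
  have hA : ∀ k : ℕ, 0 < Y * T ^ k + Z := fun k => by positivity
  have hKval : ∀ k : ℕ, 1 / (K (k + 1)) ^ 2 = (Y * T ^ k + Z) / X := by
    intro k
    rw [hK (k + 1) (by omega)]
    simp only [Nat.add_sub_cancel]
    rw [Real.sq_sqrt (by positivity : (0:ℝ) ≤ X / (Y * T ^ k + Z)), one_div, inv_div]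
  have h3 : K (j + 2 + 1) = Real.sqrt (X / (Y * T ^ (j + 2) + Z)) := by
    rw [hK (j + 2 + 1) (by omega)]; norm_num
  have h1 : (j + 2 - 1 : ℕ) = j + 1 := rfl
  rw [h3, hKval (j + 1), h1, hKval j]
  rw [one_div, ← Real.sqrt_inv, inv_div]
  congr 1
  field_simp
  ring
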